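/- Let κ be regular and λ = (2^{<κ})^+. Then λ^+ → (λ^+, κ+1)^2: for every f : [λ^+]^2 → 2, either there is a 0-homogeneous set of cardinality λ^+ or a 1-homogeneous set of order type κ+1. -/

import Mathlib

open Cardinal Ordinal

/-- The order type of a set of ordinals (an `Ordinal.{1}` for universe reasons). -/
noncomputable def otype (s : Set Ordinal.{0}) : Ordinal.{1} :=
  Ordinal.type (Subrel ((· < ·) : Ordinal → Ordinal → Prop) (· ∈ s))

/-- `OT s o` means the set of ordinals `s` has order type `o`. -/
def OT (s : Set Ordinal.{0}) (o : Ordinal.{0}) : Prop := otype s = Ordinal.lift.{1,0} o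

/-- `2^{<κ} = sup { 2^μ : μ < κ }`. -/
noncomputable def twoLT (κ : Cardinal.{0}) : Cardinal.{0} := ⨆ μ : Set.Iio κ, 2 ^ (μ : Cardinal)

/-- `X` is `i`-homogeneous for the pair coloring `f`. -/
def Homog {α : Type*} (f : Ordinal → Ordinal → α) (X : Set Ordinal) (i : α) : Prop :=
  ∀ a ∈ X, ∀ b ∈ X, a < b → f a b = i

/-- For `κ` regular and `λ = (2^{<κ})⁺`: `λ⁺ → (λ⁺, κ+1)²`. -/


instance (priority := 1000) instWOtoType (o : Ordinal.{u}) : IsWellOrder o.ToType (· < ·) := isWellOrder_lt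

section arith
variable {κ : Cardinal.{0}}

lemma twoLT_bdd : BddAbove (Set.range fun μ : Set.Iio κ => (2 : Cardinal) ^ (μ : Cardinal)) := by
  refine ⟨(2 : Cardinal) ^ κ, ?_⟩
  rintro x ⟨⟨μ, hμ⟩, rfl⟩
  exact power_le_power_left two_ne_zero hμ.le

lemma twoLT_eq : twoLT κ = ⨆ μ : Set.Iio κ, (2 : Cardinal) ^ (μ : Cardinal) := rfl

lemma two_pow_le_twoLT {μ : Cardinal.{0}} (h : μ < κ) : (2 : Cardinal) ^ μ ≤ twoLT κ := by
  rw [twoLT_eq]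
  exact le_ciSup twoLT_bdd (⟨μ, h⟩ : Set.Iio κ)

lemma le_twoLT (hκ : ℵ₀ ≤ κ) : κ ≤ twoLT κ := by
  refine le_of_forall_lt fun c hc => ?_
  exact lt_of_lt_of_le (Cardinal.cantor c) (two_pow_le_twoLT hc)

lemma aleph0_le_twoLT (hκ : ℵ₀ ≤ κ) : ℵ₀ ≤ twoLT κ := hκ.trans (le_twoLT hκ)

lemma exists_of_lt_twoLT (hκ : ℵ₀ ≤ κ) {d : Cardinal.{0}} (h : d < twoLT κ) :
    ∃ μ < κ, d < (2 : Cardinal) ^ μ := by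
  have hne : Nonempty (Set.Iio κ) := ⟨⟨0, lt_of_lt_of_le aleph0_pos hκ⟩⟩
  rw [twoLT_eq, lt_ciSup_iff twoLT_bdd] at h
  obtain ⟨⟨μ, hμ⟩, hlt⟩ := h
  exact ⟨μ, hμ, hlt⟩

/-- bounded-functions argument -/
lemma pow_le_mul_of_lt_cof {c m e : Cardinal.{0}} (hc : ℵ₀ ≤ c) (hm : m < c.ord.cof)
    (hd : ∀ d < c, d ^ m ≤ e) : c ^ m ≤ c * e := by
  have hcard : #c.ord.ToType = c := mk_ord_toType c
  have hbdd : ∀ g : m.out → c.ord.ToType, ∃ b : c.ord.ToType, ∀ i, g i < b := by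
    intro g
    have hS : #(Set.range g) < Ordinal.cof (Ordinal.type ((· < ·) : c.ord.ToType → c.ord.ToType → Prop)) := by
      rw [type_toType]
      exact lt_of_le_of_lt Cardinal.mk_range_le (by rwa [Cardinal.mk_out])
    have hS' : #(Set.range g) < Order.cof c.ord.ToType := by
      rw [Ordinal.cof_toType]; rwa [type_toType] at hS
    obtain ⟨b, hb⟩ := not_isCofinal_iff.1 (fun hc => absurd (Order.cof_le hc) (not_le.2 hS'))
    exact ⟨b, fun i => hb (g i) (Set.mem_range_self i)⟩
  choose B hB using hbdd
  have hinj : Function.Injective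
      (fun g : m.out → c.ord.ToType =>
        (⟨B g, fun i => ⟨g i, hB g i⟩⟩ : Σ b : c.ord.ToType, (m.out → Set.Iio b))) := by
    have : Function.LeftInverse
        (fun p : Σ b : c.ord.ToType, (m.out → Set.Iio b) => fun i => (p.2 i).1)
        (fun g : m.out → c.ord.ToType =>
          (⟨B g, fun i => ⟨g i, hB g i⟩⟩ : Σ b : c.ord.ToType, (m.out → Set.Iio b))) :=
      fun g => rfl
    exact this.injective
  have hle : c ^ m ≤ #(Σ b : c.ord.ToType, (m.out → Set.Iio b)) := by
    have key : #(m.out → c.ord.ToType) = c ^ m := by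
      rw [← power_def, hcard, Cardinal.mk_out]
    rw [← key]
    exact Cardinal.mk_le_of_injective hinj
  refine hle.trans ?_
  rw [Cardinal.mk_sigma]
  calc (Cardinal.sum fun b : c.ord.ToType => #(m.out → Set.Iio b))
      ≤ Cardinal.sum fun _ : c.ord.ToType => e := by
        refine Cardinal.sum_le_sum _ _ fun b => ?_
        have h1 : #(m.out → Set.Iio b) = #(Set.Iio b) ^ m := by
          rw [← power_def, Cardinal.mk_out]
        rw [h1]
        exact hd _ (mk_Iio_ord_toType b)
    _ = c * e := by rw [Cardinal.sum_const', hcard]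

lemma twoLT_pow (hκ : κ.IsRegular) {m : Cardinal.{0}} (hm : m < κ) :
    (twoLT κ) ^ m ≤ twoLT κ := by
  have hνinf : ℵ₀ ≤ twoLT κ := aleph0_le_twoLT hκ.aleph0_le
  by_cases hA : ∃ μ₀ < κ, twoLT κ ≤ (2 : Cardinal) ^ μ₀
  · obtain ⟨μ₀, hμ₀, hle⟩ := hA
    calc (twoLT κ) ^ m ≤ ((2 : Cardinal) ^ μ₀) ^ m := power_le_power_right hle
      _ = (2 : Cardinal) ^ (μ₀ * m) := power_mul.symm
      _ ≤ twoLT κ := two_pow_le_twoLT (Cardinal.mul_lt_of_lt hκ.aleph0_le hμ₀ hm)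
  · push_neg at hA
    have hcof : κ ≤ ((twoLT κ).ord).cof := by
      by_contra hcof
      push_neg at hcof
      obtain ⟨S, hSunb, hScard⟩ :=
        Order.exists_cof_eq (twoLT κ).ord.ToType
      have hS : #S < κ := by
        rw [hScard, Ordinal.cof_toType]
        exact hcof
      have hμx : ∀ x : S, ∃ μ < κ,
          Ordinal.card (Ordinal.typein ((· < ·) : (twoLT κ).ord.ToType → (twoLT κ).ord.ToType → Prop) x.1)
          < (2 : Cardinal) ^ μ :=
        fun x => exists_of_lt_twoLT hκ.aleph0_le (card_typein_toType_lt (twoLT κ) x.1)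
      choose μx hμxκ hμxlt using hμx
      have hμs : (⨆ x : S, μx x) < κ := Cardinal.iSup_lt_of_isRegular hκ hS hμxκ
      have hall : ∀ d < twoLT κ, d ≤ (2 : Cardinal) ^ (⨆ x : S, μx x) := by
        intro d hd
        have hdord : d.ord < Ordinal.type ((· < ·) : (twoLT κ).ord.ToType → (twoLT κ).ord.ToType → Prop) := by
          rw [type_toType]
          exact Cardinal.ord_lt_ord.2 hd
        obtain ⟨x, hxS, hx⟩ :=
          hSunb (Ordinal.enum ((· < ·) : (twoLT κ).ord.ToType → (twoLT κ).ord.ToType → Prop) ⟨d.ord, hdord⟩)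
        have h1 : d.ord ≤ Ordinal.typein ((· < ·) : (twoLT κ).ord.ToType → (twoLT κ).ord.ToType → Prop) x := by
          rw [← Ordinal.typein_enum ((· < ·) : (twoLT κ).ord.ToType → (twoLT κ).ord.ToType → Prop) hdord]
          exact (Ordinal.typein_le_typein _).2 (not_lt.2 hx)
        have h2 : d ≤ Ordinal.card (Ordinal.typein ((· < ·) :
            (twoLT κ).ord.ToType → (twoLT κ).ord.ToType → Prop) x) := by
          simpa using Ordinal.card_le_card h1
        refine h2.trans ((hμxlt ⟨x, hxS⟩).le.trans ?_)
        exact power_le_power_left two_ne_zero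
          (le_ciSup (Cardinal.bddAbove_range _) (⟨x, hxS⟩ : S))
      have h2μ : (2 : Cardinal) ^ (⨆ x : S, μx x) < twoLT κ := hA _ hμs
      have hcontra : twoLT κ ≤ (2 : Cardinal) ^ (⨆ x : S, μx x) := by
        have hne : Nonempty (Set.Iio κ) := ⟨⟨0, lt_of_lt_of_le aleph0_pos hκ.aleph0_le⟩⟩
        conv_lhs => rw [twoLT_eq]
        exact ciSup_le fun ⟨μ, hμ⟩ => hall _ (hA μ hμ)
      exact absurd hcontra (not_le.2 h2μ)
    have hd : ∀ d < twoLT κ, d ^ m ≤ twoLT κ := by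
      intro d hd
      obtain ⟨μ, hμ, hlt⟩ := exists_of_lt_twoLT hκ.aleph0_le hd
      calc d ^ m ≤ ((2 : Cardinal) ^ μ) ^ m := power_le_power_right hlt.le
        _ = (2 : Cardinal) ^ (μ * m) := power_mul.symm
        _ ≤ twoLT κ := two_pow_le_twoLT (Cardinal.mul_lt_of_lt hκ.aleph0_le hμ hm)
    calc (twoLT κ) ^ m ≤ twoLT κ * twoLT κ :=
        pow_le_mul_of_lt_cof hνinf (hm.trans_le hcof) hd
      _ = twoLT κ := Cardinal.mul_eq_self hνinf

end arith


lemma OT_image (o : Ordinal.{0}) (e : Ordinal.{0} → Ordinal.{0})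
    (he : ∀ i < o, ∀ j < o, i < j → e i < e j) : OT (e '' Set.Iio o) o := by
  have hmono : ∀ i : Set.Iio o, ∀ j : Set.Iio o, i.1 < j.1 → e i.1 < e j.1 :=
    fun i j h => he i.1 i.2 j.1 j.2 h
  have hF : Function.Bijective (fun i : Set.Iio o =>
      (⟨e i.1, ⟨i.1, i.2, rfl⟩⟩ : e '' Set.Iio o)) := by
    constructor
    · intro i j hij
      rcases lt_trichotomy i.1 j.1 with h | h | h
      · exact absurd (congrArg Subtype.val hij) (hmono i j h).ne
      · exact Subtype.ext h
      · exact absurd (congrArg Subtype.val hij).symm (hmono j i h).ne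
    · rintro ⟨x, i, hi, rfl⟩
      exact ⟨⟨i, hi⟩, rfl⟩
  have hiso : (Subrel ((· < ·) : Ordinal → Ordinal → Prop) (· ∈ Set.Iio o)) ≃r
      (Subrel ((· < ·) : Ordinal → Ordinal → Prop) (· ∈ e '' Set.Iio o)) := by
    refine ⟨Equiv.ofBijective _ hF, ?_⟩
    intro i j
    constructor
    · intro h
      rcases lt_trichotomy i.1 j.1 with h' | h' | h'
      · exact h'
      · exact absurd (congrArg e h' : e i.1 = e j.1) (ne_of_lt h)
      · exact absurd (hmono j i h') (asymm h)
    · exact fun h => hmono i j h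
  have h1 : otype (Set.Iio o) = otype (e '' Set.Iio o) := Ordinal.type_eq.2 ⟨hiso⟩
  have h2 : otype (Set.Iio o) = Ordinal.lift.{1,0} o := (Ordinal.type_Iio_lt o).trans (Ordinal.typein_ordinal o)
  exact h1.symm.trans h2

section chain
variable (g : Ordinal.{0} → Ordinal.{0} → Fin 2) (β : Ordinal.{0})

open Classical in
noncomputable def chain : Ordinal.{0} → Ordinal.{0} :=
  Ordinal.lt_wf.fix (fun i t =>
    if h : {α | α < β ∧ g α β = 1 ∧ ∀ j, ∀ hj : j < i, t j hj < β →
        (t j hj < α ∧ g (t j hj) α = 1)}.Nonempty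
    then sInf {α | α < β ∧ g α β = 1 ∧ ∀ j, ∀ hj : j < i, t j hj < β →
        (t j hj < α ∧ g (t j hj) α = 1)}
    else β)

def chainC (i : Ordinal.{0}) : Set Ordinal.{0} :=
  {α | α < β ∧ g α β = 1 ∧ ∀ j, j < i → chain g β j < β →
      (chain g β j < α ∧ g (chain g β j) α = 1)}

open Classical in
lemma chain_eq (i : Ordinal.{0}) :
    chain g β i = if (chainC g β i).Nonempty then sInf (chainC g β i) else β := by
  unfold chain
  rw [WellFounded.fix_eq]
  unfold chainC chain
  simp only []
  congr

open Classical in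
lemma chain_mem {i : Ordinal.{0}} (h : (chainC g β i).Nonempty) :
    chain g β i ∈ chainC g β i := by
  rw [chain_eq, if_pos h]
  exact csInf_mem h

open Classical in
lemma chain_le_of_mem {i α : Ordinal.{0}} (h : α ∈ chainC g β i) : chain g β i ≤ α := by
  rw [chain_eq, if_pos ⟨α, h⟩]
  exact csInf_le' h

lemma chain_lt {i : Ordinal.{0}} (h : (chainC g β i).Nonempty) : chain g β i < β :=
  (chain_mem g β h).1

open Classical in
lemma chain_of_empty {i : Ordinal.{0}} (h : ¬ (chainC g β i).Nonempty) : chain g β i = β := by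
  rw [chain_eq, if_neg h]

lemma chainC_anti {i i' : Ordinal.{0}} (h : i ≤ i') : chainC g β i' ⊆ chainC g β i :=
  fun α hα => ⟨hα.1, hα.2.1, fun j hj hjβ => hα.2.2 j (lt_of_lt_of_le hj h) hjβ⟩

lemma exists_chainC_empty : ∃ i, ¬ (chainC g β i).Nonempty := by
  by_contra hall
  push_neg at hall
  have hsm : StrictMono (chain g β) := by
    intro i i' hii'
    have h2 := chain_mem g β (hall i')
    exact (h2.2.2 i hii' (chain_lt g β (hall i))).1
  exact absurd (chain_lt g β (hall β)) (not_lt.2 hsm.le_apply)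

noncomputable def chainLen : Ordinal.{0} := sInf {i | ¬ (chainC g β i).Nonempty}

lemma chainC_chainLen : ¬ (chainC g β (chainLen g β)).Nonempty :=
  csInf_mem (exists_chainC_empty g β)

lemma chainC_nonempty_of_lt {i : Ordinal.{0}} (h : i < chainLen g β) :
    (chainC g β i).Nonempty := by
  by_contra hc
  exact absurd h (not_lt.2 (csInf_le' hc))

lemma chain_props {i j : Ordinal.{0}} (hij : i < j) (hj : j < chainLen g β) :
    chain g β i < chain g β j ∧ g (chain g β i) (chain g β j) = 1 := by
  have hmem := chain_mem g β (chainC_nonempty_of_lt g β hj)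
  exact hmem.2.2 i hij (chain_lt g β (chainC_nonempty_of_lt g β (hij.trans hj)))

lemma chain_lt_beta {i : Ordinal.{0}} (hi : i < chainLen g β) : chain g β i < β :=
  chain_lt g β (chainC_nonempty_of_lt g β hi)

lemma chain_one {i : Ordinal.{0}} (hi : i < chainLen g β) : g (chain g β i) β = 1 :=
  (chain_mem g β (chainC_nonempty_of_lt g β hi)).2.1

/-- the stopping condition -/
lemma chain_stop {α : Ordinal.{0}} (h1 : α < β)
    (h2 : ∀ j < chainLen g β, chain g β j < α ∧ g (chain g β j) α = 1) :
    g α β ≠ 1 := by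
  intro hg
  exact chainC_chainLen g β ⟨α, h1, hg, fun j hj _ => h2 j hj⟩

end chain

lemma bdd_of_card_lt {θ : Ordinal.{0}} {X : Set Ordinal.{0}} (hX : X ⊆ Set.Iio θ)
    (h : #X < Cardinal.lift.{1,0} θ.cof) : ∃ b < θ, ∀ x ∈ X, x < b := by
  set T : Set θ.ToType := {y | (((ToType.mk (o := θ)).symm y) : Ordinal) ∈ X} with hT
  have hequiv : Nonempty (X ≃ T) := by
    refine ⟨⟨fun x => ⟨ToType.mk (o := θ) ⟨x.1, hX x.2⟩, by simp [hT, x.2]⟩,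
      fun y => ⟨((ToType.mk (o := θ)).symm y.1).1, y.2⟩, ?_, ?_⟩⟩
    · intro x
      ext
      simp
    · intro y
      ext
      simp
  have hTcard : #T < θ.cof := by
    have h1 : Cardinal.lift.{0,1} #X = Cardinal.lift.{1,0} #T :=
      Cardinal.lift_mk_eq'.2 hequiv
    rw [Cardinal.lift_id'] at h1
    rw [h1] at h
    exact Cardinal.lift_lt.1 h
  have hbdd : ∃ b0, ∀ y ∈ T, y < b0 := by
    apply not_isCofinal_iff.1
    intro hc
    exact absurd (Order.cof_le hc) (not_le.2 (by rwa [Ordinal.cof_toType]))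
  obtain ⟨b0, hb0⟩ := hbdd
  refine ⟨((ToType.mk (o := θ)).symm b0).1, ((ToType.mk (o := θ)).symm b0).2, ?_⟩
  intro x hx
  have h1 : ToType.mk (o := θ) ⟨x, hX hx⟩ ∈ T := by simp [hT, hx]
  have h2 := hb0 _ h1
  have h3 := (ToType.mk (o := θ)).symm.lt_iff_lt.2 h2
  rw [OrderIso.symm_apply_apply] at h3
  exact h3


/-- For `κ` regular and `λ = (2^{<κ})⁺`: `λ⁺ → (λ⁺, κ+1)²`. -/
theorem lambdaSucc_arrow (κ : Cardinal.{0}) (hκ : κ.IsRegular)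
    (f : Ordinal → Ordinal → Fin 2) :
    (∃ X ⊆ Set.Iio (Order.succ (Order.succ (twoLT κ))).ord,
        Cardinal.mk X = Cardinal.lift.{1,0} (Order.succ (Order.succ (twoLT κ))) ∧
        Homog f X 0) ∨
      ∃ X ⊆ Set.Iio (Order.succ (Order.succ (twoLT κ))).ord,
        OT X (κ.ord + 1) ∧ Homog f X 1 := by
  classical
  have fin2 : ∀ v : Fin 2, v ≠ 1 → v = 0 := by decide
  set ν := twoLT κ with hνdef
  set lam := Order.succ ν with hlamdef
  set mu := Order.succ lam with hmudef
  set θ := mu.ord with hθdef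
  have hνinf : ℵ₀ ≤ ν := aleph0_le_twoLT hκ.aleph0_le
  have hκν : κ ≤ ν := le_twoLT hκ.aleph0_le
  have hνlam : ν < lam := Order.lt_succ ν
  have hlaminf : ℵ₀ ≤ lam := hνinf.trans hνlam.le
  have hlammu : lam < mu := Order.lt_succ lam
  have hmuinf : ℵ₀ ≤ mu := hlaminf.trans hlammu.le
  have hlamreg : lam.IsRegular := isRegular_succ hνinf
  have hmureg : mu.IsRegular := isRegular_succ hlaminf
  have hθlim : Order.IsSuccLimit θ := Cardinal.isSuccLimit_ord hmuinf
  have hκord : Order.IsSuccLimit κ.ord := Cardinal.isSuccLimit_ord hκ.aleph0_le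
  have hlam_pow : ∀ m < κ, lam ^ m ≤ lam := by
    intro m hm
    have h1 : ∀ d < lam, d ^ m ≤ ν := fun d hd =>
      (power_le_power_right (Order.lt_succ_iff.1 hd)).trans (twoLT_pow hκ hm)
    have h2 : m < lam.ord.cof := by
      rw [hlamreg.cof_eq]
      exact lt_of_lt_of_le hm (hκν.trans hνlam.le)
    calc lam ^ m ≤ lam * ν := pow_le_mul_of_lt_cof hlaminf h2 h1
      _ ≤ lam * lam := mul_le_mul_right hνlam.le lam
      _ = lam := Cardinal.mul_eq_self hlaminf
  by_cases hB : ∃ β < θ, κ.ord ≤ chainLen f β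
  · -- second alternative : 1-homogeneous set of order type κ+1
    obtain ⟨β, hβθ, hlen⟩ := hB
    right
    set e : Ordinal → Ordinal := fun i => if i < κ.ord then chain f β i else β with hedef
    have hmono : ∀ i < κ.ord + 1, ∀ j < κ.ord + 1, i < j → e i < e j := by
      intro i hi j hj hij
      rw [Ordinal.add_one_eq_succ, Order.lt_succ_iff] at hi hj
      rcases lt_or_eq_of_le hj with hjκ | hjκ
      · have hiκ : i < κ.ord := lt_of_lt_of_le hij hj
        simp only [hedef, if_pos hiκ, if_pos hjκ]
        exact (chain_props f β hij (lt_of_lt_of_le hjκ hlen)).1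
      · subst hjκ
        simp only [hedef, if_pos hij, if_neg (lt_irrefl κ.ord)]
        exact chain_lt_beta f β (lt_of_lt_of_le hij hlen)
    refine ⟨e '' Set.Iio (κ.ord + 1), ?_, OT_image _ _ hmono, ?_⟩
    · rintro x ⟨i, hi, rfl⟩
      by_cases hiκ : i < κ.ord
      · simp only [hedef, if_pos hiκ]
        exact lt_trans (chain_lt_beta f β (lt_of_lt_of_le hiκ hlen)) hβθ
      · simp only [hedef, if_neg hiκ]
        exact hβθ
    · rintro a ⟨i, hi, rfl⟩ b ⟨j, hj, rfl⟩ hab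
      have hij : i < j := by
        rcases lt_trichotomy i j with h | h | h
        · exact h
        · exact absurd (h ▸ hab) (lt_irrefl _)
        · exact absurd hab (not_lt.2 (hmono j hj i hi h).le)
      have hi' : i ≤ κ.ord := by
        have := hi
        simp only [Set.mem_Iio, Ordinal.add_one_eq_succ, Order.lt_succ_iff] at this
        exact this
      have hj' : j ≤ κ.ord := by
        have := hj
        simp only [Set.mem_Iio, Ordinal.add_one_eq_succ, Order.lt_succ_iff] at this
        exact this
      rcases lt_or_eq_of_le hj' with hjκ | hjκ
      · have hiκ : i < κ.ord := lt_of_lt_of_le hij hj'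
        have h1 := (chain_props f β hij (lt_of_lt_of_le hjκ hlen)).2
        simpa only [hedef, if_pos hiκ, if_pos hjκ] using h1
      · subst hjκ
        have h1 := chain_one f β (lt_of_lt_of_le hij hlen)
        simpa only [hedef, if_pos hij, if_neg (lt_irrefl κ.ord)] using h1
  · -- first alternative
    push_neg at hB
    left
    set Xset : Ordinal.{0} → Set Ordinal.{0} :=
      fun γ => {β | β < θ ∧ ∀ j < chainLen f β, chain f β j < γ} with hXdef
    have hXsub : ∀ γ, Xset γ ⊆ Set.Iio θ := fun γ x hx => hx.1
    -- weak Fodor argument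
    have hFod : ∃ γ < θ, Cardinal.lift.{1,0} mu ≤ #(Xset γ) := by
      by_contra hcon
      push_neg at hcon
      have hbnd : ∀ γ, ∃ b, γ < θ → (b < θ ∧ ∀ x ∈ Xset γ, x < b) := by
        intro γ
        by_cases hγ : γ < θ
        · have h1 : #(Xset γ) < Cardinal.lift.{1,0} θ.cof := by
            rw [hθdef, hmureg.cof_eq]
            exact hcon γ hγ
          obtain ⟨b, hbθ, hb⟩ := bdd_of_card_lt (hXsub γ) h1
          exact ⟨b, fun _ => ⟨hbθ, hb⟩⟩
        · exact ⟨0, fun h => absurd h hγ⟩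
      choose hfun hfunspec using hbnd
      set s : Ordinal → Ordinal := fun γ => max (hfun γ) γ + 1 with hsdef
      have hsθ : ∀ γ < θ, s γ < θ := by
        intro γ hγ
        rw [hsdef]
        simp only
        rw [Ordinal.add_one_eq_succ]
        exact hθlim.succ_lt (max_lt ((hfunspec γ hγ).1) hγ)
      have hsmax : ∀ γ, hfun γ ⊔ γ < s γ := by
        intro γ
        show _ < hfun γ ⊔ γ + 1
        rw [Ordinal.add_one_eq_succ]
        exact Order.lt_succ _
      have hsmono' : ∀ γ, γ < s γ := fun γ =>
        lt_of_le_of_lt (le_max_right (hfun γ) γ) (hsmax γ)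
      obtain ⟨G, hGeq⟩ : ∃ G : Ordinal.{0} → Ordinal.{0},
          ∀ i, G i = Ordinal.bsup i (fun j _ => s (G j)) :=
        ⟨Ordinal.lt_wf.fix (fun i G' => Ordinal.bsup i (fun j hj => s (G' j hj))),
          fun i => Ordinal.lt_wf.fix_eq _ i⟩
      have hGstep : ∀ j i, j < i → s (G j) ≤ G i := by
        intro j i h
        rw [hGeq i]
        exact Ordinal.le_bsup _ j h
      have hGlt : ∀ j i, j < i → G j < G i := fun j i h =>
        lt_of_lt_of_le (hsmono' (G j)) (hGstep j i h)
      have hGle : ∀ j i, j ≤ i → G j ≤ G i := by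
        intro j i h
        rcases lt_or_eq_of_le h with h | h
        · exact (hGlt j i h).le
        · exact h ▸ le_rfl
      have hGθ : ∀ i, i ≤ κ.ord → G i < θ := by
        intro i
        induction i using Ordinal.induction with
        | h i IH =>
          intro hi
          rw [hGeq]
          apply Ordinal.bsup_lt_ord
          · rw [hθdef, hmureg.cof_eq]
            calc i.card ≤ κ.ord.card := Ordinal.card_le_card hi
              _ = κ := Cardinal.card_ord κ
              _ < mu := lt_of_le_of_lt (hκν.trans hνlam.le) hlammu
          · intro j hj
            exact hsθ _ (IH j hj (le_of_lt (lt_of_lt_of_le hj hi)))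
      have hβθ : G κ.ord < θ := hGθ κ.ord le_rfl
      have hval : ∀ i, i < chainLen f (G κ.ord) →
          ∃ j, j < κ.ord ∧ chain f (G κ.ord) i < G j := by
        intro i hi
        have h1 : chain f (G κ.ord) i < Ordinal.bsup κ.ord (fun j _ => s (G j)) :=
          lt_of_lt_of_le (chain_lt_beta f _ hi) (le_of_eq (hGeq κ.ord))
        obtain ⟨j, hj, hlt⟩ := (Ordinal.lt_bsup _).1 h1
        refine ⟨j + 1, ?_, lt_of_lt_of_le hlt (hGstep j (j + 1) ?_)⟩
        · rw [Ordinal.add_one_eq_succ]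
          exact hκord.succ_lt hj
        · rw [Ordinal.add_one_eq_succ]
          exact Order.lt_succ j
      choose jfun hjκ hjlt using hval
      set jhat := Ordinal.bsup (chainLen f (G κ.ord)) (fun i hi => jfun i hi) with hjhatdef
      have hjhat : jhat < κ.ord := by
        apply Ordinal.bsup_lt_ord
        · rw [hκ.cof_eq]
          exact Cardinal.lt_ord.1 (hB _ hβθ)
        · exact hjκ
      have hγθ : G jhat < θ := lt_trans (hGlt jhat κ.ord hjhat) hβθ
      have hmem : G κ.ord ∈ Xset (G jhat) := by
        refine ⟨hβθ, fun i hi => lt_of_lt_of_le (hjlt i hi) (hGle _ _ ?_)⟩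
        exact Ordinal.le_bsup _ i hi
      have h1 : G κ.ord < hfun (G jhat) := (hfunspec _ hγθ).2 _ hmem
      have h2 : s (G jhat) ≤ G κ.ord := hGstep jhat κ.ord hjhat
      have h3 : hfun (G jhat) < s (G jhat) :=
        lt_of_le_of_lt (le_max_left _ (G jhat)) (hsmax _)
      exact absurd ((h1.trans h3).trans_le h2) (lt_irrefl _)
    obtain ⟨γ, hγθ, hbig⟩ := hFod
    -- first pigeonhole: fix the chain length
    have hpig1 := Cardinal.infinite_pigeonhole_set
      (fun β : (Xset γ) => (⟨chainLen f β.1, hB β.1 β.2.1⟩ : Set.Iio κ.ord))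
      (Cardinal.lift.{1,0} mu) hbig (Cardinal.aleph0_le_lift.2 hmuinf) ?hc1
    case hc1 =>
      rw [← Cardinal.lift_ord, ← Ordinal.lift_cof, hmureg.cof_eq]
      rw [Ordinal.mk_Iio_ordinal, Cardinal.card_ord]
      exact Cardinal.lift_lt.2 (lt_of_le_of_lt (hκν.trans hνlam.le) hlammu)
    obtain ⟨ρ₀, t₁, ht₁sub, ht₁card, ht₁len⟩ := hpig1
    have hlen1 : ∀ x, x ∈ t₁ → chainLen f x = ρ₀.1 := fun x hx =>
      congrArg Subtype.val (ht₁len hx)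
    -- second pigeonhole: fix the chain itself
    have hcard_fun : #(Set.Iio ρ₀.1 → Set.Iio γ) < Cardinal.lift.{1,0} mu := by
      rw [← Cardinal.power_def, Ordinal.mk_Iio_ordinal, Ordinal.mk_Iio_ordinal,
        ← Cardinal.lift_power]
      refine Cardinal.lift_lt.2 (lt_of_le_of_lt ?_ hlammu)
      have hγcard : γ.card ≤ lam := Order.lt_succ_iff.1 (Cardinal.lt_ord.1 hγθ)
      calc γ.card ^ (ρ₀.1).card ≤ lam ^ (ρ₀.1).card :=
            power_le_power_right hγcard
        _ ≤ lam := hlam_pow _ (Cardinal.lt_ord.1 ρ₀.2)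
    have hpig2 := Cardinal.infinite_pigeonhole_set
      (fun x : t₁ => (fun j : Set.Iio ρ₀.1 =>
        (⟨chain f x.1 j.1, by
          have h1 := hlen1 x.1 x.2
          exact (ht₁sub x.2).2 j.1 (lt_of_lt_of_le j.2 (le_of_eq h1.symm))⟩ : Set.Iio γ)))
      (Cardinal.lift.{1,0} mu) ht₁card (Cardinal.aleph0_le_lift.2 hmuinf) (by
        rw [← Cardinal.lift_ord, ← Ordinal.lift_cof, hmureg.cof_eq]
        exact hcard_fun)
    obtain ⟨c₀, t₂, ht₂sub, ht₂card, ht₂ch⟩ := hpig2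
    have hcheq : ∀ x, x ∈ t₂ → ∀ j, (hj : j < ρ₀.1) →
        chain f x j = (c₀ ⟨j, hj⟩).1 := by
      intro x hx j hj
      exact congrArg Subtype.val (congrFun (ht₂ch hx) ⟨j, hj⟩)
    set A : Set Ordinal.{0} := {x | x ∈ t₂ ∧ γ < x} with hAdef
    have hAsub : A ⊆ Set.Iio θ := fun x hx => (ht₁sub (ht₂sub hx.1)).1
    have hAcard : #A = Cardinal.lift.{1,0} mu := by
      refine le_antisymm ?_ ?_
      · calc #A ≤ #(Set.Iio θ) := Cardinal.mk_le_mk_of_subset hAsub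
          _ = Cardinal.lift.{1,0} mu := by
            rw [Ordinal.mk_Iio_ordinal, hθdef, Cardinal.card_ord]
      · by_contra hless
        push_neg at hless
        have hsub2 : t₂ ⊆ A ∪ Set.Iio (γ + 1) := by
          intro x hx
          by_cases h : γ < x
          · exact Or.inl ⟨hx, h⟩
          · refine Or.inr (Set.mem_Iio.2 ?_)
            rw [Ordinal.add_one_eq_succ]
            exact Order.lt_succ_iff.2 (not_lt.1 h)
        have hIic : #(Set.Iio (γ + 1)) < Cardinal.lift.{1,0} mu := by
          rw [Ordinal.mk_Iio_ordinal]
          refine Cardinal.lift_lt.2 (Cardinal.lt_ord.1 ?_)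
          rw [Ordinal.add_one_eq_succ]
          exact hθlim.succ_lt hγθ
        have h1 : #t₂ ≤ #A + #(Set.Iio (γ + 1)) :=
          (Cardinal.mk_le_mk_of_subset hsub2).trans (Cardinal.mk_union_le _ _)
        have h2 : #A + #(Set.Iio (γ + 1)) < Cardinal.lift.{1,0} mu :=
          Cardinal.add_lt_of_lt (Cardinal.aleph0_le_lift.2 hmuinf) hless hIic
        exact absurd (ht₂card.trans h1) (not_le.2 h2)
    refine ⟨A, hAsub, hAcard, ?_⟩
    intro a ha b hb hab
    refine fin2 _ (chain_stop f b hab ?_)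
    intro j hj
    have hbt₁ : b ∈ t₁ := ht₂sub hb.1
    have hat₁ : a ∈ t₁ := ht₂sub ha.1
    have hlenb : chainLen f b = ρ₀.1 := hlen1 b hbt₁
    have hlena : chainLen f a = ρ₀.1 := hlen1 a hat₁
    have hjρ : j < ρ₀.1 := hlenb ▸ hj
    have hceq : chain f b j = chain f a j := by
      rw [hcheq b hb.1 j hjρ, hcheq a ha.1 j hjρ]
    have hja : j < chainLen f a := hlena ▸ hjρ
    constructor
    · rw [hceq]
      exact lt_trans ((ht₁sub hat₁).2 j hja) ha.2
    · rw [hceq]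
      exact chain_one f a hja
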